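/- Let ω > 0 be a faithful state (density matrix) on a finite dimensional Hilbert space with Hamiltonian H, ω_t = e^{−itH} ω e^{itH}, and e_t(s) = log Tr(ω_t^s ω^{1−s}). Then e_{−t}(s) = e_t(1−s) for all s, t ∈ ℝ. Moreover, if there is an antiunitary involution θ commuting with both H and ω (time-reversal invariance), then e_t(s) = e_t(1−s). -/

import Mathlib

open scoped ComplexOrder

attribute [local instance] Matrix.linftyOpNormedAddCommGroup Matrix.linftyOpNormedRing
  Matrix.linftyOpNormedAlgebra

/-- Functional calculus for Hermitian matrices (junk value `0` off the Hermitian matrices). -/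
noncomputable def cfcM {d : ℕ} (f : ℝ → ℝ) (A : Matrix (Fin d) (Fin d) ℂ) :
    Matrix (Fin d) (Fin d) ℂ :=
  if h : A.IsHermitian then
    (h.eigenvectorUnitary : Matrix (Fin d) (Fin d) ℂ) *
      Matrix.diagonal (fun i => (f (h.eigenvalues i) : ℂ)) *
      (star (h.eigenvectorUnitary : Matrix (Fin d) (Fin d) ℂ))
  else 0

/-- Real power of a (positive) Hermitian matrix via functional calculus. -/
noncomputable def mpow {d : ℕ} (A : Matrix (Fin d) (Fin d) ℂ) (s : ℝ) :
    Matrix (Fin d) (Fin d) ℂ := cfcM (fun x => x ^ s) A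

/-- Heisenberg evolution of the state `ω`: `ω_t = e^{−itH} ω e^{itH}`. -/
noncomputable def stateAt {d : ℕ} (H ω : Matrix (Fin d) (Fin d) ℂ) (t : ℝ) :
    Matrix (Fin d) (Fin d) ℂ :=
  NormedSpace.exp ((-(Complex.I * t)) • H) * ω * NormedSpace.exp ((Complex.I * t) • H)

/-- Rényi entropic functional `e_t(s) = log Tr(ω_t^s ω^{1−s})`. -/
noncomputable def renyiFun {d : ℕ} (H ω : Matrix (Fin d) (Fin d) ℂ) (t s : ℝ) : ℝ :=
  Real.log (((mpow (stateAt H ω t) s * mpow ω (1 - s)).trace).re)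

section Aux
variable {d : ℕ}

lemma contOnAux (A : Matrix (Fin d) (Fin d) ℂ) (f : ℝ → ℝ) : ContinuousOn f (spectrum ℝ A) := by
  rw [continuousOn_iff_continuous_restrict]; fun_prop

lemma cfcM_eq {A : Matrix (Fin d) (Fin d) ℂ} (hA : A.IsHermitian) (f : ℝ → ℝ) :
    cfcM f A = cfc f A := by
  rw [hA.cfc_eq, cfcM, dif_pos hA]; rfl

noncomputable def conjSAH (U : Matrix (Fin d) (Fin d) ℂ) (hU : U * star U = 1)
    (hU' : star U * U = 1) : Matrix (Fin d) (Fin d) ℂ →⋆ₐ[ℝ] Matrix (Fin d) (Fin d) ℂ where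
  toFun M := U * M * star U
  map_one' := by show U * 1 * star U = 1; rw [mul_one, hU]
  map_mul' M N := by
    show U * (M * N) * star U = (U * M * star U) * (U * N * star U)
    rw [show (U*M*star U)*(U*N*star U) = U*(M*((star U*U)*N))*star U from by noncomm_ring, hU',
      one_mul, mul_assoc]
  map_zero' := by simp
  map_add' M N := by noncomm_ring
  commutes' r := by
    show U * algebraMap ℝ _ r * star U = algebraMap ℝ _ r
    simp only [Algebra.algebraMap_eq_smul_one, mul_smul_comm, smul_mul_assoc, mul_one, one_mul, hU]
  map_star' M := by simp [mul_assoc]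

lemma conjSAH_cont (U : Matrix (Fin d) (Fin d) ℂ) (hU : U * star U = 1) (hU' : star U * U = 1) :
    Continuous (conjSAH U hU hU') := by
  show Continuous fun M => U * M * star U
  fun_prop

lemma isHermitian_conj {A : Matrix (Fin d) (Fin d) ℂ} (hA : A.IsHermitian)
    (U : Matrix (Fin d) (Fin d) ℂ) : (U * A * star U).IsHermitian := by
  unfold Matrix.IsHermitian
  simp only [Matrix.star_eq_conjTranspose, Matrix.conjTranspose_mul,
    Matrix.conjTranspose_conjTranspose, hA.eq, mul_assoc]

lemma cfcM_unitary_conj {A : Matrix (Fin d) (Fin d) ℂ} (hA : A.IsHermitian) (f : ℝ → ℝ)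
    (U : Matrix (Fin d) (Fin d) ℂ) (hU : U * star U = 1) (hU' : star U * U = 1) :
    cfcM f (U * A * star U) = U * cfcM f A * star U := by
  rw [cfcM_eq hA, cfcM_eq (isHermitian_conj hA U)]
  exact (StarAlgHom.map_cfc (S := ℝ) (conjSAH U hU hU') f A (contOnAux A f)
    (conjSAH_cont U hU hU') hA (isHermitian_conj hA U)).symm

lemma mpow_unitary_conj {A : Matrix (Fin d) (Fin d) ℂ} (hA : A.IsHermitian) (s : ℝ)
    (U : Matrix (Fin d) (Fin d) ℂ) (hU : U * star U = 1) (hU' : star U * U = 1) :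
    mpow (U * A * star U) s = U * mpow A s * star U :=
  cfcM_unitary_conj hA _ U hU hU'

/-- entrywise conjugation as a real star algebra homomorphism -/
noncomputable def entryConjSAH : Matrix (Fin d) (Fin d) ℂ →⋆ₐ[ℝ] Matrix (Fin d) (Fin d) ℂ where
  __ := (starRingEnd ℂ).mapMatrix
  commutes' r := by
    ext i j
    by_cases h : i = j <;> simp [Matrix.algebraMap_matrix_apply, Matrix.map_apply, h]
  map_star' M := by
    ext i j
    simp [Matrix.map_apply, Matrix.star_eq_conjTranspose, Matrix.conjTranspose_apply]

lemma entryConjSAH_cont : Continuous (entryConjSAH (d := d)) :=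
  LinearMap.continuous_of_finiteDimensional (entryConjSAH (d := d)).toLinearMap

lemma isHermitian_entryConj {A : Matrix (Fin d) (Fin d) ℂ} (hA : A.IsHermitian) :
    (A.map (starRingEnd ℂ)).IsHermitian := by
  ext i j
  simp only [Matrix.conjTranspose_apply, Matrix.map_apply, starRingEnd_apply, star_star]
  conv_rhs => rw [← hA.eq]
  simp [Matrix.conjTranspose_apply]

lemma cfcM_entryConj {A : Matrix (Fin d) (Fin d) ℂ} (hA : A.IsHermitian) (f : ℝ → ℝ) :
    cfcM f (A.map (starRingEnd ℂ)) = (cfcM f A).map (starRingEnd ℂ) := by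
  rw [cfcM_eq hA, cfcM_eq (isHermitian_entryConj hA)]
  exact (StarAlgHom.map_cfc (S := ℝ) entryConjSAH f A (contOnAux A f)
    entryConjSAH_cont hA (isHermitian_entryConj hA)).symm

lemma mpow_entryConj {A : Matrix (Fin d) (Fin d) ℂ} (hA : A.IsHermitian) (s : ℝ) :
    mpow (A.map (starRingEnd ℂ)) s = (mpow A s).map (starRingEnd ℂ) := cfcM_entryConj hA _

lemma trace_entryConj (A : Matrix (Fin d) (Fin d) ℂ) :
    (A.map (starRingEnd ℂ)).trace = (starRingEnd ℂ) A.trace := by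
  simp [Matrix.trace, Matrix.map_apply, map_sum, Matrix.diag]

lemma map_conj_mul (A B : Matrix (Fin d) (Fin d) ℂ) :
    (A * B).map (starRingEnd ℂ) = A.map (starRingEnd ℂ) * B.map (starRingEnd ℂ) :=
  map_mul ((starRingEnd ℂ).mapMatrix) A B

-- exp facts
lemma exp_smul_mul (H : Matrix (Fin d) (Fin d) ℂ) (a b : ℂ) :
    NormedSpace.exp (a • H) * NormedSpace.exp (b • H) = NormedSpace.exp ((a + b) • H) := by
  rw [add_smul]
  have hc : Commute (a • H) (b • H) := by
    unfold Commute SemiconjBy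
    rw [smul_mul_smul_comm, smul_mul_smul_comm, mul_comm a b]
  exact (NormedSpace.exp_add_of_commute hc).symm

lemma star_exp_smul {H : Matrix (Fin d) (Fin d) ℂ} (hH : H.IsHermitian) (a : ℂ) :
    star (NormedSpace.exp (a • H)) = NormedSpace.exp ((starRingEnd ℂ a) • H) := by
  rw [NormedSpace.star_exp, star_smul, Matrix.star_eq_conjTranspose, hH.eq]
  rfl

lemma conj_exp_smul (H : Matrix (Fin d) (Fin d) ℂ) (a : ℂ) :
    (NormedSpace.exp (a • H)).map (starRingEnd ℂ) =
      NormedSpace.exp ((starRingEnd ℂ a) • H.map (starRingEnd ℂ)) := by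
  have hcont : Continuous ((starRingEnd ℂ).mapMatrix :
      Matrix (Fin d) (Fin d) ℂ →+* Matrix (Fin d) (Fin d) ℂ) := entryConjSAH_cont
  have h := NormedSpace.map_exp
    (f := ((starRingEnd ℂ).mapMatrix : Matrix (Fin d) (Fin d) ℂ →+* Matrix (Fin d) (Fin d) ℂ))
    hcont (a • H)
  simp only [RingHom.mapMatrix_apply] at h
  refine h.trans ?_
  congr 1
  ext i j
  simp [Matrix.map_apply]

end Aux

section Main
variable {d : ℕ}

@[simp] lemma conjSAH_apply (U : Matrix (Fin d) (Fin d) ℂ) (hU : U * star U = 1)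
    (hU' : star U * U = 1) (M : Matrix (Fin d) (Fin d) ℂ) :
    conjSAH U hU hU' M = U * M * star U := rfl

lemma trace_conj_pair (U A B : Matrix (Fin d) (Fin d) ℂ) (hU : U * star U = 1)
    (hU' : star U * U = 1) :
    ((U * A * star U) * (U * B * star U)).trace = (A * B).trace := by
  rw [show (U*A*star U)*(U*B*star U) = U*(A*((star U*U)*B))*star U from by noncomm_ring, hU',
    one_mul, Matrix.trace_mul_comm, ← mul_assoc, hU', one_mul]

lemma exp_unitary {H : Matrix (Fin d) (Fin d) ℂ} (hH : H.IsHermitian) (t : ℝ) :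
    (NormedSpace.exp ((-(Complex.I * t)) • H)) *
      star (NormedSpace.exp ((-(Complex.I * t)) • H)) = 1 ∧
    star (NormedSpace.exp ((-(Complex.I * t)) • H)) *
      (NormedSpace.exp ((-(Complex.I * t)) • H)) = 1 ∧
    star (NormedSpace.exp ((-(Complex.I * t)) • H)) =
      NormedSpace.exp ((Complex.I * t) • H) := by
  have hs : star (NormedSpace.exp ((-(Complex.I * t)) • H)) =
      NormedSpace.exp ((Complex.I * t) • H) := by
    rw [star_exp_smul hH]
    congr 1
    simp [Complex.conj_ofReal]
  refine ⟨?_, ?_, hs⟩ <;>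
    rw [hs, exp_smul_mul] <;> simp [NormedSpace.exp_zero]

lemma stateAt_conj_form {H ω : Matrix (Fin d) (Fin d) ℂ} (hH : H.IsHermitian) (t : ℝ) :
    stateAt H ω t = (NormedSpace.exp ((-(Complex.I * t)) • H)) * ω *
      star (NormedSpace.exp ((-(Complex.I * t)) • H)) := by
  rw [stateAt, (exp_unitary hH t).2.2]

lemma stateAt_isHermitian {H ω : Matrix (Fin d) (Fin d) ℂ} (hH : H.IsHermitian)
    (hω : ω.IsHermitian) (t : ℝ) : (stateAt H ω t).IsHermitian := by
  rw [stateAt_conj_form hH t]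
  exact isHermitian_conj hω _


/-- `e_{−t}(s) = e_t(1−s)`; and under time-reversal invariance (an antiunitary involution
`v ↦ V conj v` commuting with `H` and `ω`) the Evans–Searles symmetry `e_t(s) = e_t(1−s)`. -/
theorem renyi_evans_searles {d : ℕ}
    (H ω : Matrix (Fin d) (Fin d) ℂ) (hH : H.IsHermitian)
    (hω : ω.PosDef) (htr : ω.trace = 1) :
    (∀ t s : ℝ, renyiFun H ω (-t) s = renyiFun H ω t (1 - s)) ∧
    ((∃ V : Matrix (Fin d) (Fin d) ℂ,
        V * star V = 1 ∧
        V * V.map (starRingEnd ℂ) = 1 ∧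
        V * H.map (starRingEnd ℂ) = H * V ∧
        V * ω.map (starRingEnd ℂ) = ω * V) →
      ∀ t s : ℝ, renyiFun H ω t s = renyiFun H ω t (1 - s)) := by
  
  have part1 : ∀ t s : ℝ, renyiFun H ω (-t) s = renyiFun H ω t (1 - s) := by
    intro t s
    set U := NormedSpace.exp ((-(Complex.I * t)) • H) with hUdef
    obtain ⟨h1, h2, hs⟩ := exp_unitary hH t
    have hst : stateAt H ω t = U * ω * star U := stateAt_conj_form hH t
    have hst' : stateAt H ω (-t) = star U * ω * star (star U) := by
      have e1 : (-(Complex.I * ((-t : ℝ) : ℂ))) = Complex.I * (t : ℂ) := by push_cast; ring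
      have e2 : (Complex.I * ((-t : ℝ) : ℂ)) = -(Complex.I * (t : ℂ)) := by push_cast; ring
      rw [stateAt, e1, e2, star_star, hs]
    have hω1 : ω = star U * stateAt H ω t * star (star U) := by
      rw [star_star, hst,
        show star U * (U * ω * star U) * U = (star U * U) * ω * (star U * U) from by noncomm_ring,
        h2, one_mul, mul_one]
    have hU1 : star U * star (star U) = 1 := by rw [star_star]; exact h2
    have hU2 : star (star U) * star U = 1 := by rw [star_star]; exact h1
    have hm1 : mpow (stateAt H ω (-t)) s = star U * mpow ω s * star (star U) := by
      rw [hst']; exact mpow_unitary_conj hω.1 s (star U) hU1 hU2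
    have hm2 : mpow ω (1 - s) = star U * mpow (stateAt H ω t) (1 - s) * star (star U) := by
      conv_lhs => rw [hω1]
      exact mpow_unitary_conj (stateAt_isHermitian hH hω.1 t) (1 - s) (star U) hU1 hU2
    have htrace : (mpow (stateAt H ω (-t)) s * mpow ω (1 - s)).trace =
        (mpow (stateAt H ω t) (1 - s) * mpow ω (1 - (1 - s))).trace := by
      rw [hm1, hm2, trace_conj_pair _ _ _ hU1 hU2, sub_sub_cancel,
        Matrix.trace_mul_comm]
    rw [renyiFun, renyiFun, htrace]
  refine ⟨part1, ?_⟩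
  rintro ⟨V, hV1, hV2, hVH, hVω⟩ t s
  have hV1' : star V * V = 1 := mul_eq_one_comm.mp hV1
  -- stateAt H ω (-t) = V * conj (stateAt H ω t) * star V
  have hkey : ∀ c : ℂ, V * NormedSpace.exp (c • H.map (starRingEnd ℂ)) * star V =
      NormedSpace.exp (c • H) := by
    intro c
    have h := NormedSpace.map_exp (conjSAH V hV1 hV1')
      (conjSAH_cont V hV1 hV1') (c • H.map (starRingEnd ℂ))
    rw [conjSAH_apply] at h
    refine h.trans ?_
    rw [conjSAH_apply, mul_smul_comm, smul_mul_assoc, hVH, mul_assoc, hV1, mul_one]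
    rfl
  have hωconj : V * ω.map (starRingEnd ℂ) * star V = ω := by
    rw [hVω, mul_assoc, hV1, mul_one]
  have c1 : (starRingEnd ℂ) (-(Complex.I * t)) = Complex.I * t := by
    simp [Complex.conj_ofReal]
  have c2 : (starRingEnd ℂ) (Complex.I * (t : ℂ)) = -(Complex.I * t) := by
    simp [Complex.conj_ofReal]
  have hmap : (stateAt H ω t).map (starRingEnd ℂ) =
      NormedSpace.exp ((Complex.I * t) • H.map (starRingEnd ℂ)) * ω.map (starRingEnd ℂ) *
        NormedSpace.exp ((-(Complex.I * t)) • H.map (starRingEnd ℂ)) := by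
    rw [stateAt, map_conj_mul, map_conj_mul, conj_exp_smul, conj_exp_smul, c1, c2]
  have exp3 : ∀ X Y Z : Matrix (Fin d) (Fin d) ℂ,
      V * (X * Y * Z) * star V = (V*X*star V) * (V*Y*star V) * (V*Z*star V) := by
    intro X Y Z
    rw [show (V*X*star V)*(V*Y*star V)*(V*Z*star V)
        = V*(X*((star V*V)*Y*((star V*V)*Z)))*star V from by noncomm_ring, hV1']
    noncomm_ring
  have hrev : stateAt H ω (-t) = V * (stateAt H ω t).map (starRingEnd ℂ) * star V := by
    rw [hmap, exp3, hkey, hkey, hωconj, stateAt,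
      show (-(Complex.I * ((-t : ℝ) : ℂ))) = Complex.I * (t : ℂ) from by push_cast; ring,
      show (Complex.I * ((-t : ℝ) : ℂ)) = -(Complex.I * (t : ℂ)) from by push_cast; ring]
  have hconjst : ((stateAt H ω t).map (starRingEnd ℂ)).IsHermitian :=
    isHermitian_entryConj (stateAt_isHermitian hH hω.1 t)
  have hm1 : mpow (stateAt H ω (-t)) s =
      V * ((mpow (stateAt H ω t) s).map (starRingEnd ℂ)) * star V := by
    rw [hrev, mpow_unitary_conj hconjst s V hV1 hV1',
      mpow_entryConj (stateAt_isHermitian hH hω.1 t)]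
  have hm2 : mpow ω (1 - s) = V * ((mpow ω (1 - s)).map (starRingEnd ℂ)) * star V := by
    conv_lhs => rw [← hωconj]
    rw [mpow_unitary_conj (isHermitian_entryConj hω.1) _ V hV1 hV1', mpow_entryConj hω.1]
  have htrace : (mpow (stateAt H ω (-t)) s * mpow ω (1 - s)).trace =
      starRingEnd ℂ ((mpow (stateAt H ω t) s * mpow ω (1 - s)).trace) := by
    conv_lhs => rw [hm1, hm2]
    rw [trace_conj_pair _ _ _ hV1 hV1', ← map_conj_mul, trace_entryConj]
  have hsym : renyiFun H ω (-t) s = renyiFun H ω t s := by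
    rw [renyiFun, renyiFun, htrace, Complex.conj_re]
  rw [← hsym]
  exact part1 t s

end Main
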